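/- Telescoped global error recursion (Theorem 3.2). Under the setup below, define for k ≥ 2 the remainders ℛ_k := 2 G⁻¹ sin((h/2)G) Σ_{l=0}^{k−2} ∫₀ʰ cos(((k−l)h − h/2 − τ)G) (m(t_l+τ)((τ²/2) \bar{E}_l + E_l(τ))) dτ + ∫₀ʰ G⁻¹ sin((h−τ)G) (m(t_{k−1}+τ)((τ²/2) \bar{E}_{k−1} + E_{k−1}(τ))) dτ and ℛ'_k := −2 sin((h/2)G) Σ_{l=0}^{k−2} ∫₀ʰ sin(((k−l)h − h/2 − τ)G) (m(t_l+τ)((τ²/2) \bar{E}_l + E_l(τ))) dτ + ∫₀ʰ cos((h−τ)G) (m(t_{k−1}+τ)((τ²/2) \bar{E}_{k−1} + E_{k−1}(τ))) dτ, and set ℛ₁ := ∫₀ʰ G⁻¹ sin((h−τ)G)(m(t₀+τ)(E₀(τ))) dτ, ℛ'₁ := ∫₀ʰ cos((h−τ)G)(m(t₀+τ)(E₀(τ))) dτ. Then ε₁ = ℛ₁, ε'₁ = ℛ'₁, and for every 2 ≤ k ≤ K: ε_k = ε_{k−1} + 2 G⁻¹ sin((h/2)G) Σ_{l=1}^{k−2}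 ∫₀ʰ cos(((k−l)h − h/2 − τ)G)(m(t_l+τ)(ε_l + τ(1+τ/(2h)) ε'_l − (τ²/(2h)) ε'_{l−1})) dτ + ∫₀ʰ G⁻¹ sin((h−τ)G)(m(t_{k−1}+τ)(ε_{k−1} + τ(1+τ/(2h)) ε'_{k−1} − (τ²/(2h)) ε'_{k−2})) dτ + ℛ_k, and ε'_k = ε'_{k−1} − 2 sin((h/2)G) Σ_{l=1}^{k−2} ∫₀ʰ sin(((k−l)h − h/2 − τ)G)(m(t_l+τ)(ε_l + τ(1+τ/(2h)) ε'_l − (τ²/(2h)) ε'_{l−1})) dτ + ∫₀ʰ cos((h−τ)G)(m(t_{k−1}+τ)(ε_{k−1} + τ(1+τ/(2h)) ε'_{k−1} − (τ²/(2h)) ε'_{k−2})) dτ + ℛ'_k. -/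

import Mathlib

/-- `cos(tG) := (exp(itG) + exp(−itG))/2` in a complex unital Banach algebra. -/
noncomputable def opCos {A : Type*} [NormedRing A] [NormedAlgebra ℂ A] (t : ℝ) (G : A) : A :=
  (2 : ℂ)⁻¹ • (NormedSpace.exp (((t : ℂ) * Complex.I) • G) +
    NormedSpace.exp ((-(t : ℂ) * Complex.I) • G))

/-- `sin(tG) := (exp(itG) − exp(−itG))/(2i)` in a complex unital Banach algebra. -/
noncomputable def opSin {A : Type*} [NormedRing A] [NormedAlgebra ℂ A] (t : ℝ) (G : A) : A :=
  (2 * Complex.I)⁻¹ • (NormedSpace.exp (((t : ℂ) * Complex.I) • G) -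
    NormedSpace.exp ((-(t : ℂ) * Complex.I) • G))

set_option linter.unreachableTactic false
set_option linter.unusedTactic false
set_option maxHeartbeats 1000000

noncomputable def Eop {A : Type*} [NormedRing A] [NormedAlgebra ℂ A] (G : A) (t : ℝ) : A :=
  NormedSpace.exp (((t : ℂ) * Complex.I) • G)

section helpers
set_option linter.unusedSectionVars false
variable {A : Type*} [NormedRing A] [NormedAlgebra ℂ A] [CompleteSpace A] (G : A)

noncomputable def ratAlgA : NormedAlgebra ℚ A := NormedAlgebra.restrictScalars ℚ ℂ A

attribute [local instance] ratAlgA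

lemma Eop_mul (s t : ℝ) : Eop G s * Eop G t = Eop G (s + t) := by
  unfold Eop
  rw [← NormedSpace.exp_add_of_commute (((Commute.refl G).smul_left _).smul_right _),
    ← add_smul]
  congr 2
  push_cast
  ring

lemma opCos_eq (t : ℝ) : opCos t G = (2:ℂ)⁻¹ • (Eop G t + Eop G (-t)) := by
  unfold opCos Eop
  push_cast
  ring_nf

lemma opSin_eq (t : ℝ) : opSin t G = ((2:ℂ)⁻¹ * (-Complex.I)) • (Eop G t - Eop G (-t)) := by
  unfold opSin Eop
  rw [mul_inv, Complex.inv_I]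
  push_cast
  ring_nf

lemma opCC_sub_SS (a b : ℝ) :
    opCos a G * opCos b G - opSin a G * opSin b G = opCos (a + b) G := by
  have e1 : Eop G (a + -b) = Eop G (a - b) := by ring_nf
  have e2 : Eop G (-a + b) = Eop G (-(a - b)) := by ring_nf
  have e3 : Eop G (-a + -b) = Eop G (-(a + b)) := by ring_nf
  rw [opCos_eq, opCos_eq, opSin_eq, opSin_eq, opCos_eq, smul_mul_smul_comm, smul_mul_smul_comm,
    add_mul, mul_add, mul_add, sub_mul, mul_sub, mul_sub]
  simp only [Eop_mul, e1, e2, e3]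
  match_scalars <;> (try ring_nf) <;> (try simp [Complex.I_sq]) <;> (try norm_num) <;> (try ring_nf)

lemma opSC_add_CS (a b : ℝ) :
    opSin a G * opCos b G + opCos a G * opSin b G = opSin (a + b) G := by
  have e1 : Eop G (a + -b) = Eop G (a - b) := by ring_nf
  have e2 : Eop G (-a + b) = Eop G (-(a - b)) := by ring_nf
  have e3 : Eop G (-a + -b) = Eop G (-(a + b)) := by ring_nf
  rw [opCos_eq, opCos_eq, opSin_eq, opSin_eq, opSin_eq, smul_mul_smul_comm, smul_mul_smul_comm,
    sub_mul, mul_add, mul_add, add_mul, mul_sub, mul_sub]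
  simp only [Eop_mul, e1, e2, e3]
  match_scalars <;> (try ring_nf) <;> (try simp [Complex.I_sq]) <;> (try norm_num) <;> (try ring_nf)

lemma opSin_sub_opSin (a b : ℝ) :
    opSin (a + b) G - opSin (a - b) G = (2:ℂ) • (opSin b G * opCos a G) := by
  have e1 : Eop G (b + -a) = Eop G (-(a - b)) := by ring_nf
  have e2 : Eop G (-b + a) = Eop G (a - b) := by ring_nf
  have e3 : Eop G (-b + -a) = Eop G (-(a + b)) := by ring_nf
  have e4 : Eop G (b + a) = Eop G (a + b) := by ring_nf
  rw [opSin_eq, opSin_eq, opSin_eq, opCos_eq, smul_mul_smul_comm,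
    sub_mul, mul_add, mul_add]
  simp only [Eop_mul, e1, e2, e3, e4]
  match_scalars <;> (try ring_nf) <;> (try simp [Complex.I_sq]) <;> (try norm_num) <;> (try ring_nf)

lemma opCos_sub_opCos (a b : ℝ) :
    opCos (a + b) G - opCos (a - b) G = -((2:ℂ) • (opSin b G * opSin a G)) := by
  have e1 : Eop G (b + -a) = Eop G (-(a - b)) := by ring_nf
  have e2 : Eop G (-b + a) = Eop G (a - b) := by ring_nf
  have e3 : Eop G (-b + -a) = Eop G (-(a + b)) := by ring_nf
  have e4 : Eop G (b + a) = Eop G (a + b) := by ring_nf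
  rw [opCos_eq, opCos_eq, opSin_eq, opSin_eq, smul_mul_smul_comm,
    sub_mul, mul_sub, mul_sub]
  simp only [Eop_mul, e1, e2, e3, e4]
  match_scalars <;> (try ring_nf) <;> (try simp [Complex.I_sq]) <;> (try norm_num) <;> (try ring_nf)

lemma opSin_congr {a b : ℝ} (hab : a = b) : opSin a G = opSin b G := by rw [hab]

lemma opCos_congr {a b : ℝ} (hab : a = b) : opCos a G = opCos b G := by rw [hab]

lemma commute_Eop {B : A} (hB : Commute B G) (t : ℝ) : Commute B (Eop G t) :=
  (hB.smul_right _).exp_right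

lemma commute_opCos {B : A} (hB : Commute B G) (t : ℝ) : Commute B (opCos t G) := by
  rw [opCos_eq]
  exact ((commute_Eop G hB t).add_right (commute_Eop G hB (-t))).smul_right _

lemma commute_opSin {B : A} (hB : Commute B G) (t : ℝ) : Commute B (opSin t G) := by
  rw [opSin_eq]
  exact ((commute_Eop G hB t).sub_right (commute_Eop G hB (-t))).smul_right _

lemma continuous_Eop : Continuous (Eop G) := by
  unfold Eop
  exact NormedSpace.exp_continuous.comp
    (((Complex.continuous_ofReal.mul continuous_const).smul continuous_const))

lemma continuous_opCos : Continuous (fun t => opCos t G) := by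
  simp only [opCos_eq]
  exact (((continuous_Eop G)).add ((continuous_Eop G).comp continuous_neg)).const_smul _

lemma continuous_opSin : Continuous (fun t => opSin t G) := by
  simp only [opSin_eq]
  exact (((continuous_Eop G)).sub ((continuous_Eop G).comp continuous_neg)).const_smul _

end helpers

section main
open MeasureTheory intervalIntegral
variable {E : Type*} [NormedAddCommGroup E] [NormedSpace ℂ E] [CompleteSpace E]

theorem auxMain
    (G Ginv : E →L[ℂ] E) (hGr : G * Ginv = 1) (hGl : Ginv * G = 1)
    (t₀ h : ℝ) (hh : 0 < h) (K : ℕ) (hK : 2 ≤ K)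
    (m : ℝ → (E →L[ℂ] E)) (hm : Continuous m)
    (ψ φ σ : ℝ → E)
    (hdψ : ∀ t : ℝ, HasDerivAt ψ (φ t) t) (hdφ : ∀ t : ℝ, HasDerivAt φ (σ t) t)
    (hstepψ : ∀ k : ℕ, k ≤ K - 1 →
      ψ (t₀ + ((k : ℝ) + 1) * h) =
        opCos h G (ψ (t₀ + k * h)) + Ginv (opSin h G (φ (t₀ + k * h))) +
          ∫ τ in (0:ℝ)..h,
            Ginv (opSin (h - τ) G (m (t₀ + k * h + τ) (ψ (t₀ + k * h + τ)))))
    (hstepφ : ∀ k : ℕ, k ≤ K - 1 →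
      φ (t₀ + ((k : ℝ) + 1) * h) =
        -(G (opSin h G (ψ (t₀ + k * h)))) + opCos h G (φ (t₀ + k * h)) +
          ∫ τ in (0:ℝ)..h,
            opCos (h - τ) G (m (t₀ + k * h + τ) (ψ (t₀ + k * h + τ))))
    (Ψ Ψ' : ℕ → E) (hΨ0 : Ψ 0 = ψ t₀) (hΨ'0 : Ψ' 0 = φ t₀)
    (hΨ1 : Ψ 1 = opCos h G (ψ t₀) + Ginv (opSin h G (φ t₀)) +
      ∫ τ in (0:ℝ)..h,
        Ginv (opSin (h - τ) G (m (t₀ + τ)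
          (ψ t₀ + τ • φ t₀ + (τ ^ 2 / 2) • σ t₀))))
    (hΨ'1 : Ψ' 1 = -(G (opSin h G (ψ t₀))) + opCos h G (φ t₀) +
      ∫ τ in (0:ℝ)..h,
        opCos (h - τ) G (m (t₀ + τ)
          (ψ t₀ + τ • φ t₀ + (τ ^ 2 / 2) • σ t₀)))
    (hΨstep : ∀ k : ℕ, 1 ≤ k → k ≤ K - 1 →
      Ψ (k + 1) = opCos h G (Ψ k) + Ginv (opSin h G (Ψ' k)) +
        ∫ τ in (0:ℝ)..h,
          Ginv (opSin (h - τ) G (m (t₀ + k * h + τ)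
            (Ψ k + τ • Ψ' k + (τ ^ 2 / (2 * h)) • (Ψ' k - Ψ' (k - 1))))))
    (hΨ'step : ∀ k : ℕ, 1 ≤ k → k ≤ K - 1 →
      Ψ' (k + 1) = -(G (opSin h G (Ψ k))) + opCos h G (Ψ' k) +
        ∫ τ in (0:ℝ)..h,
          opCos (h - τ) G (m (t₀ + k * h + τ)
            (Ψ k + τ • Ψ' k + (τ ^ 2 / (2 * h)) • (Ψ' k - Ψ' (k - 1)))))
    (ε ε' : ℕ → E) (Etay : ℕ → ℝ → E) (Ebar : ℕ → E)
    (hε : ∀ k : ℕ, ε k = ψ (t₀ + k * h) - Ψ k)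
    (hε' : ∀ k : ℕ, ε' k = φ (t₀ + k * h) - Ψ' k)
    (hEtay : ∀ (l : ℕ) (τ : ℝ), Etay l τ =
      ψ (t₀ + l * h + τ) - ψ (t₀ + l * h) - τ • φ (t₀ + l * h) - (τ ^ 2 / 2) • σ (t₀ + l * h))
    (hEbar0 : Ebar 0 = 0)
    (hEbar : ∀ l : ℕ, l ≠ 0 → Ebar l =
      σ (t₀ + l * h) - h⁻¹ • (φ (t₀ + l * h) - φ (t₀ + ((l : ℝ) - 1) * h))) :
    (ε 1 = ∫ τ in (0:ℝ)..h, Ginv (opSin (h - τ) G (m (t₀ + τ) (Etay 0 τ)))) ∧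
    (ε' 1 = ∫ τ in (0:ℝ)..h, opCos (h - τ) G (m (t₀ + τ) (Etay 0 τ))) ∧
      ∀ k : ℕ, 2 ≤ k → k ≤ K →
        (ε k = ε (k - 1) +
          (2 : ℝ) • Ginv (opSin (h / 2) G
            (∑ l ∈ Finset.Icc 1 (k - 2),
              ∫ τ in (0:ℝ)..h,
                opCos (((k : ℝ) - l) * h - h / 2 - τ) G
                  (m (t₀ + l * h + τ)
                    (ε l + (τ * (1 + τ / (2 * h))) • ε' l -
                      (τ ^ 2 / (2 * h)) • ε' (l - 1))))) +
          (∫ τ in (0:ℝ)..h,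
            Ginv (opSin (h - τ) G
              (m (t₀ + (k - 1 : ℕ) * h + τ)
                (ε (k - 1) + (τ * (1 + τ / (2 * h))) • ε' (k - 1) -
                  (τ ^ 2 / (2 * h)) • ε' (k - 2))))) +
          ((2 : ℝ) • Ginv (opSin (h / 2) G
            (∑ l ∈ Finset.range (k - 1),
              ∫ τ in (0:ℝ)..h,
                opCos (((k : ℝ) - l) * h - h / 2 - τ) G
                  (m (t₀ + l * h + τ) ((τ ^ 2 / 2) • Ebar l + Etay l τ)))) +
          ∫ τ in (0:ℝ)..h,
            Ginv (opSin (h - τ) G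
              (m (t₀ + (k - 1 : ℕ) * h + τ)
                ((τ ^ 2 / 2) • Ebar (k - 1) + Etay (k - 1) τ))))) ∧
        (ε' k = ε' (k - 1) -
          (2 : ℝ) • opSin (h / 2) G
            (∑ l ∈ Finset.Icc 1 (k - 2),
              ∫ τ in (0:ℝ)..h,
                opSin (((k : ℝ) - l) * h - h / 2 - τ) G
                  (m (t₀ + l * h + τ)
                    (ε l + (τ * (1 + τ / (2 * h))) • ε' l -
                      (τ ^ 2 / (2 * h)) • ε' (l - 1)))) +
          (∫ τ in (0:ℝ)..h,
            opCos (h - τ) G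
              (m (t₀ + (k - 1 : ℕ) * h + τ)
                (ε (k - 1) + (τ * (1 + τ / (2 * h))) • ε' (k - 1) -
                  (τ ^ 2 / (2 * h)) • ε' (k - 2)))) +
          (-((2 : ℝ) • opSin (h / 2) G
            (∑ l ∈ Finset.range (k - 1),
              ∫ τ in (0:ℝ)..h,
                opSin (((k : ℝ) - l) * h - h / 2 - τ) G
                  (m (t₀ + l * h + τ) ((τ ^ 2 / 2) • Ebar l + Etay l τ)))) +
          ∫ τ in (0:ℝ)..h,
            opCos (h - τ) G
              (m (t₀ + (k - 1 : ℕ) * h + τ)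
                ((τ ^ 2 / 2) • Ebar (k - 1) + Etay (k - 1) τ)))) := by
  have hne : h ≠ 0 := ne_of_gt hh
  have hcomm : Commute Ginv G := hGl.trans hGr.symm
  have hCG : ∀ (t : ℝ) (y : E), opCos t G (Ginv y) = Ginv (opCos t G y) := by
    intro t y
    have hc := (commute_opCos G hcomm t).eq
    have h2 : (Ginv * opCos t G) y = (opCos t G * Ginv) y := by rw [hc]
    simpa [ContinuousLinearMap.mul_apply] using h2.symm
  have hSG : ∀ (t : ℝ) (y : E), opSin t G (Ginv y) = Ginv (opSin t G y) := by
    intro t y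
    have hc := (commute_opSin G hcomm t).eq
    have h2 : (Ginv * opSin t G) y = (opSin t G * Ginv) y := by rw [hc]
    simpa [ContinuousLinearMap.mul_apply] using h2.symm
  have hGS : ∀ (t : ℝ) (y : E), G (opSin t G (Ginv y)) = opSin t G y := by
    intro t y
    have hc : G * opSin t G * Ginv = opSin t G := by
      rw [(commute_opSin G (Commute.refl G) t).eq, mul_assoc, hGr, mul_one]
    have h2 := congrArg (fun (B : E →L[ℂ] E) => B y) hc
    simpa [ContinuousLinearMap.mul_apply] using h2
  have hGsmul : ∀ (r : ℝ) (y : E), Ginv (r • y) = r • Ginv y := fun r y => by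
    rw [← Complex.coe_smul, _root_.map_smul, Complex.coe_smul]
  have combψ : ∀ (a : ℝ) (x : E),
      opCos h G (Ginv (opSin a G x)) + Ginv (opSin h G (opCos a G x)) =
        Ginv (opSin (h + a) G x) := by
    intro a x
    rw [hCG, ← map_add]
    congr 1
    have h2 := congrArg (fun (B : E →L[ℂ] E) => B x) (opSC_add_CS G h a)
    simp only [ContinuousLinearMap.mul_apply, ContinuousLinearMap.add_apply] at h2
    rw [← h2]; abel
  have combφ : ∀ (a : ℝ) (x : E),
      -(G (opSin h G (Ginv (opSin a G x)))) + opCos h G (opCos a G x) = opCos (h + a) G x := by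
    intro a x
    rw [hGS, neg_add_eq_sub]
    have h2 := congrArg (fun (B : E →L[ℂ] E) => B x) (opCC_sub_SS G h a)
    simpa [ContinuousLinearMap.mul_apply, ContinuousLinearMap.sub_apply] using h2
  have telS : ∀ (a : ℝ) (x : E),
      opSin (a + h/2) G x - opSin (a - h/2) G x = (2:ℝ) • opSin (h/2) G (opCos a G x) := by
    intro a x
    have h2 := congrArg (fun (B : E →L[ℂ] E) => B x) (opSin_sub_opSin G a (h/2))
    simp only [ContinuousLinearMap.sub_apply, ContinuousLinearMap.smul_apply,
      ContinuousLinearMap.mul_apply] at h2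
    rw [h2, show ((2:ℂ)) = ((2:ℝ):ℂ) by norm_num, Complex.coe_smul]
  have telC : ∀ (a : ℝ) (x : E),
      opCos (a + h/2) G x - opCos (a - h/2) G x = -((2:ℝ) • opSin (h/2) G (opSin a G x)) := by
    intro a x
    have h2 := congrArg (fun (B : E →L[ℂ] E) => B x) (opCos_sub_opCos G a (h/2))
    simp only [ContinuousLinearMap.sub_apply, ContinuousLinearMap.smul_apply,
      ContinuousLinearMap.mul_apply, ContinuousLinearMap.neg_apply] at h2
    rw [h2, show ((2:ℂ)) = ((2:ℝ):ℂ) by norm_num, Complex.coe_smul]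
  -- continuity
  have hψc : Continuous ψ := continuous_iff_continuousAt.2 fun t => (hdψ t).continuousAt
  have hφc : Continuous φ := continuous_iff_continuousAt.2 fun t => (hdφ t).continuousAt
  have contS : ∀ (θ : ℝ → ℝ), Continuous θ → ∀ (c : ℝ) (w : ℝ → E), Continuous w →
      Continuous fun τ => opSin (θ τ) G ((m (c + τ)) (w τ)) :=
    fun θ hθ c w hw => ((continuous_opSin G).comp hθ).clm_apply
      ((hm.comp (continuous_const.add continuous_id)).clm_apply hw)
  have contC : ∀ (θ : ℝ → ℝ), Continuous θ → ∀ (c : ℝ) (w : ℝ → E), Continuous w →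
      Continuous fun τ => opCos (θ τ) G ((m (c + τ)) (w τ)) :=
    fun θ hθ c w hw => ((continuous_opCos G).comp hθ).clm_apply
      ((hm.comp (continuous_const.add continuous_id)).clm_apply hw)
  have contEtay : ∀ l : ℕ, Continuous (Etay l) := by
    intro l
    have he : Etay l = fun τ => ψ (t₀ + l*h + τ) - ψ (t₀ + l*h) - τ • φ (t₀ + l*h) -
        (τ^2/2) • σ (t₀ + l*h) := funext (hEtay l)
    rw [he]
    exact (((hψc.comp (continuous_const.add continuous_id)).sub continuous_const).sub
      (continuous_id.smul continuous_const)).sub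
      (((continuous_pow 2).div_const 2).smul continuous_const)
  set P : ℕ → ℝ → E := fun l τ =>
    ε l + (τ * (1 + τ / (2*h))) • ε' l - (τ^2/(2*h)) • ε' (l-1) with hP
  set D : ℕ → ℝ → E := fun l τ => (τ^2/2) • Ebar l + Etay l τ with hD
  set V : ℕ → ℝ → E := fun l τ => P l τ + D l τ with hV
  have contP : ∀ l, Continuous (P l) := by
    intro l; rw [hP]
    exact (continuous_const.add ((continuous_id.mul (continuous_const.add
      (continuous_id.div_const _))).smul continuous_const)).sub
      (((continuous_pow 2).div_const _).smul continuous_const)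
  have contD : ∀ l, Continuous (D l) := by
    intro l; rw [hD]
    exact (((continuous_pow 2).div_const 2).smul continuous_const).add (contEtay l)
  have contV : ∀ l, Continuous (V l) := fun l => by rw [hV]; exact (contP l).add (contD l)
  -- zero-index facts
  have hε0 : ε 0 = 0 := by rw [hε 0, hΨ0]; norm_num
  have hε'0 : ε' 0 = 0 := by rw [hε' 0, hΨ'0]; norm_num
  have hV0 : ∀ τ : ℝ, V 0 τ = Etay 0 τ := by
    intro τ
    rw [hV, hP, hD]
    simp [hε0, hε'0, hEbar0]

  -- integrability helpers
  have intGS : ∀ (θ : ℝ → ℝ), Continuous θ → ∀ (c : ℝ) (w : ℝ → E), Continuous w →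
      IntervalIntegrable (fun τ => Ginv (opSin (θ τ) G ((m (c + τ)) (w τ)))) volume 0 h :=
    fun θ hθ c w hw => (Ginv.continuous.comp (contS θ hθ c w hw)).intervalIntegrable 0 h
  have intS : ∀ (θ : ℝ → ℝ), Continuous θ → ∀ (c : ℝ) (w : ℝ → E), Continuous w →
      IntervalIntegrable (fun τ => opSin (θ τ) G ((m (c + τ)) (w τ))) volume 0 h :=
    fun θ hθ c w hw => (contS θ hθ c w hw).intervalIntegrable 0 h
  have intC : ∀ (θ : ℝ → ℝ), Continuous θ → ∀ (c : ℝ) (w : ℝ → E), Continuous w →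
      IntervalIntegrable (fun τ => opCos (θ τ) G ((m (c + τ)) (w τ))) volume 0 h :=
    fun θ hθ c w hw => (contC θ hθ c w hw).intervalIntegrable 0 h
  have contθ : Continuous fun τ : ℝ => h - τ := continuous_const.sub continuous_id
  have contψτ : ∀ c : ℝ, Continuous fun τ => ψ (c + τ) :=
    fun c => hψc.comp (continuous_const.add continuous_id)
  have contpoly0 : Continuous fun τ : ℝ => ψ t₀ + τ • φ t₀ + (τ^2/2) • σ t₀ :=
    (continuous_const.add (continuous_id.smul continuous_const)).add
      (((continuous_pow 2).div_const 2).smul continuous_const)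
  have contW : ∀ k : ℕ, Continuous fun τ : ℝ =>
      Ψ k + τ • Ψ' k + (τ^2/(2*h)) • (Ψ' k - Ψ' (k-1)) :=
    fun k => (continuous_const.add (continuous_id.smul continuous_const)).add
      (((continuous_pow 2).div_const _).smul continuous_const)
  -- base case conclusions
  have hC1 : ε 1 = ∫ τ in (0:ℝ)..h, Ginv (opSin (h - τ) G (m (t₀ + τ) (Etay 0 τ))) := by
    have e1 := hstepψ 0 (by omega)
    simp only [Nat.cast_zero, zero_mul, add_zero, zero_add, one_mul] at e1
    rw [hε 1, Nat.cast_one, one_mul, e1, hΨ1]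
    have hrw : ∀ X Y Z W : E, (X + Y + Z) - (X + Y + W) = Z - W := by intros; abel
    rw [hrw, ← intervalIntegral.integral_sub (intGS _ contθ t₀ _ (contψτ t₀))
      (intGS _ contθ t₀ _ contpoly0)]
    refine intervalIntegral.integral_congr fun τ _ => ?_
    rw [← map_sub Ginv, ← map_sub, ← map_sub]
    have he : ψ (t₀ + τ) - (ψ t₀ + τ • φ t₀ + (τ ^ 2 / 2) • σ t₀) = Etay 0 τ := by
      rw [hEtay 0 τ]; norm_num; abel
    rw [he]
  have hC2 : ε' 1 = ∫ τ in (0:ℝ)..h, opCos (h - τ) G (m (t₀ + τ) (Etay 0 τ)) := by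
    have e1 := hstepφ 0 (by omega)
    simp only [Nat.cast_zero, zero_mul, add_zero, zero_add, one_mul] at e1
    rw [hε' 1, Nat.cast_one, one_mul, e1, hΨ'1]
    have hrw : ∀ X Y Z W : E, (X + Y + Z) - (X + Y + W) = Z - W := by intros; abel
    rw [hrw, ← intervalIntegral.integral_sub (intC _ contθ t₀ _ (contψτ t₀))
      (intC _ contθ t₀ _ contpoly0)]
    refine intervalIntegral.integral_congr fun τ _ => ?_
    rw [← map_sub, ← map_sub]
    have he : ψ (t₀ + τ) - (ψ t₀ + τ • φ t₀ + (τ ^ 2 / 2) • σ t₀) = Etay 0 τ := by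
      rw [hEtay 0 τ]; norm_num; abel
    rw [he]
  -- pointwise defect identity
  have hVW : ∀ k : ℕ, 1 ≤ k → ∀ τ : ℝ,
      ψ (t₀ + k*h + τ) - (Ψ k + τ • Ψ' k + (τ^2/(2*h)) • (Ψ' k - Ψ' (k-1))) = V k τ := by
    intro k hk τ
    have hc : (((k-1:ℕ)):ℝ) = (k:ℝ) - 1 := by
      rw [Nat.cast_sub hk, Nat.cast_one]
    simp only [hV, hP, hD, hε k, hε' k, hε' (k-1), hc, hEtay k τ, hEbar k (by omega : k ≠ 0)]
    match_scalars <;> field_simp <;> ring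
  -- one-step error recursions
  have stepEψ : ∀ k : ℕ, 1 ≤ k → k ≤ K - 1 →
      ε (k+1) = opCos h G (ε k) + Ginv (opSin h G (ε' k)) +
        ∫ τ in (0:ℝ)..h, Ginv (opSin (h-τ) G (m (t₀ + k*h + τ) (V k τ))) := by
    intro k hk1 hkK
    have hcast : ((k+1:ℕ):ℝ) = (k:ℝ)+1 := by push_cast; ring
    rw [hε (k+1), hcast, hstepψ k hkK, hΨstep k hk1 hkK]
    have hrw : ∀ X Y Z X' Y' W : E,
        (X + Y + Z) - (X' + Y' + W) = (X - X') + (Y - Y') + (Z - W) := by intros; abel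
    rw [hrw, ← map_sub (opCos h G), ← map_sub Ginv, ← map_sub (opSin h G), ← hε k, ← hε' k]
    congr 1
    rw [← intervalIntegral.integral_sub (intGS _ contθ _ _ (contψτ (t₀ + k*h)))
      (intGS _ contθ _ _ (contW k))]
    refine intervalIntegral.integral_congr fun τ _ => ?_
    rw [← map_sub Ginv, ← map_sub, ← map_sub, hVW k hk1 τ]
  have stepEφ : ∀ k : ℕ, 1 ≤ k → k ≤ K - 1 →
      ε' (k+1) = -(G (opSin h G (ε k))) + opCos h G (ε' k) +
        ∫ τ in (0:ℝ)..h, opCos (h-τ) G (m (t₀ + k*h + τ) (V k τ)) := by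
    intro k hk1 hkK
    have hcast : ((k+1:ℕ):ℝ) = (k:ℝ)+1 := by push_cast; ring
    rw [hε' (k+1), hcast, hstepφ k hkK, hΨ'step k hk1 hkK]
    have hrw : ∀ X Y Z X' Y' W : E,
        (-X + Y + Z) - (-X' + Y' + W) = -(X - X') + (Y - Y') + (Z - W) := by intros; abel
    rw [hrw, ← map_sub G, ← map_sub (opSin h G), ← map_sub (opCos h G), ← hε k, ← hε' k]
    congr 1
    rw [← intervalIntegral.integral_sub (intC _ contθ _ _ (contψτ (t₀ + k*h)))
      (intC _ contθ _ _ (contW k))]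
    refine intervalIntegral.integral_congr fun τ _ => ?_
    rw [← map_sub, ← map_sub, hVW k hk1 τ]

  -- explicit sum representation
  have sumE : ∀ k : ℕ, 1 ≤ k → k ≤ K →
      (ε k = ∑ l ∈ Finset.range k, ∫ τ in (0:ℝ)..h,
          Ginv (opSin (((k:ℝ) - (l:ℝ))*h - τ) G (m (t₀ + l*h + τ) (V l τ)))) ∧
      (ε' k = ∑ l ∈ Finset.range k, ∫ τ in (0:ℝ)..h,
          opCos (((k:ℝ) - (l:ℝ))*h - τ) G (m (t₀ + l*h + τ) (V l τ))) := by
    intro k hk1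
    induction k, hk1 using Nat.le_induction with
    | base =>
      intro _
      constructor
      · rw [hC1, Finset.sum_range_one]
        refine intervalIntegral.integral_congr fun τ _ => ?_
        rw [hV0 τ, opSin_congr G (show h - τ = (((1:ℕ):ℝ) - ((0:ℕ):ℝ))*h - τ by norm_num)]
        norm_num
      · rw [hC2, Finset.sum_range_one]
        refine intervalIntegral.integral_congr fun τ _ => ?_
        rw [hV0 τ, opCos_congr G (show h - τ = (((1:ℕ):ℝ) - ((0:ℕ):ℝ))*h - τ by norm_num)]
        norm_num
    | succ k hk ih =>
      intro hK1
      obtain ⟨ih1, ih2⟩ := ih (by omega)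
      have hkK : k ≤ K - 1 := by omega
      have contθl : ∀ l : ℕ, Continuous fun τ : ℝ => ((k:ℝ)-(l:ℝ))*h - τ :=
        fun l => continuous_const.sub continuous_id
      have hterm : ∀ l ∈ Finset.range k,
          opCos h G (∫ τ in (0:ℝ)..h,
              Ginv (opSin (((k:ℝ)-(l:ℝ))*h - τ) G (m (t₀+l*h+τ) (V l τ)))) +
          Ginv (opSin h G (∫ τ in (0:ℝ)..h,
              opCos (((k:ℝ)-(l:ℝ))*h - τ) G (m (t₀+l*h+τ) (V l τ)))) =
          ∫ τ in (0:ℝ)..h,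
            Ginv (opSin ((((k:ℕ)+1:ℝ)-(l:ℝ))*h - τ) G (m (t₀+l*h+τ) (V l τ))) := by
        intro l _
        rw [← ContinuousLinearMap.intervalIntegral_comp_comm (opCos h G)
              (intGS _ (contθl l) _ _ (contV l)),
            ← ContinuousLinearMap.intervalIntegral_comp_comm (opSin h G)
              (intC _ (contθl l) _ _ (contV l)),
            ← ContinuousLinearMap.intervalIntegral_comp_comm Ginv
              ((continuous_const.clm_apply (contC _ (contθl l) _ _ (contV l))).intervalIntegrable 0 h),
            ← intervalIntegral.integral_add
              ((continuous_const.clm_apply (continuous_const.clm_apply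
                (contS _ (contθl l) _ _ (contV l)))).intervalIntegrable 0 h)
              ((continuous_const.clm_apply (continuous_const.clm_apply
                (contC _ (contθl l) _ _ (contV l)))).intervalIntegrable 0 h)]
        refine intervalIntegral.integral_congr fun τ _ => ?_
        rw [combψ, opSin_congr G
          (show h + (((k:ℝ)-(l:ℝ))*h - τ) = (((k:ℕ)+1:ℝ)-(l:ℝ))*h - τ by push_cast; ring)]
      have hterm' : ∀ l ∈ Finset.range k,
          -(G (opSin h G (∫ τ in (0:ℝ)..h,
              Ginv (opSin (((k:ℝ)-(l:ℝ))*h - τ) G (m (t₀+l*h+τ) (V l τ)))))) +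
          opCos h G (∫ τ in (0:ℝ)..h,
              opCos (((k:ℝ)-(l:ℝ))*h - τ) G (m (t₀+l*h+τ) (V l τ))) =
          ∫ τ in (0:ℝ)..h,
            opCos ((((k:ℕ)+1:ℝ)-(l:ℝ))*h - τ) G (m (t₀+l*h+τ) (V l τ)) := by
        intro l _
        rw [← ContinuousLinearMap.intervalIntegral_comp_comm (opSin h G)
              (intGS _ (contθl l) _ _ (contV l)),
            ← ContinuousLinearMap.intervalIntegral_comp_comm G
              ((continuous_const.clm_apply (continuous_const.clm_apply
                (contS _ (contθl l) _ _ (contV l)))).intervalIntegrable 0 h),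
            ← ContinuousLinearMap.intervalIntegral_comp_comm (opCos h G)
              (intC _ (contθl l) _ _ (contV l)),
            ← intervalIntegral.integral_neg,
            ← intervalIntegral.integral_add
              (f := fun τ => -(G (opSin h G (Ginv (opSin (((k:ℝ)-(l:ℝ))*h - τ) G
                (m (t₀+l*h+τ) (V l τ)))))))
              ((((continuous_const.clm_apply (continuous_const.clm_apply (continuous_const.clm_apply
                (contS _ (contθl l) _ _ (contV l))))).neg).intervalIntegrable 0 h))
              ((continuous_const.clm_apply
                (contC _ (contθl l) _ _ (contV l))).intervalIntegrable 0 h)]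
        refine intervalIntegral.integral_congr fun τ _ => ?_
        rw [combφ, opCos_congr G
          (show h + (((k:ℝ)-(l:ℝ))*h - τ) = (((k:ℕ)+1:ℝ)-(l:ℝ))*h - τ by push_cast; ring)]
      constructor
      · rw [stepEψ k hk hkK, ih1, ih2, map_sum (opCos h G), map_sum (opSin h G), map_sum Ginv,
          ← Finset.sum_add_distrib, Finset.sum_congr rfl hterm, Finset.sum_range_succ]
        congr 1
        · refine Finset.sum_congr rfl fun l _ => ?_
          refine intervalIntegral.integral_congr fun τ _ => ?_
          rw [opSin_congr G (show (((k:ℕ)+1:ℝ)-(l:ℝ))*h - τ = (((k+1:ℕ):ℝ)-(l:ℝ))*h - τ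
            by push_cast; ring)]
        · refine intervalIntegral.integral_congr fun τ _ => ?_
          rw [opSin_congr G (show h - τ = (((k+1:ℕ):ℝ)-((k:ℕ):ℝ))*h - τ by push_cast; ring)]
      · rw [stepEφ k hk hkK, ih1, ih2, map_sum (opSin h G), map_sum G, map_sum (opCos h G),
          ← Finset.sum_neg_distrib, ← Finset.sum_add_distrib,
          Finset.sum_congr rfl hterm', Finset.sum_range_succ]
        congr 1
        · refine Finset.sum_congr rfl fun l _ => ?_
          refine intervalIntegral.integral_congr fun τ _ => ?_
          rw [opCos_congr G (show (((k:ℕ)+1:ℝ)-(l:ℝ))*h - τ = (((k+1:ℕ):ℝ)-(l:ℝ))*h - τ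
            by push_cast; ring)]
        · refine intervalIntegral.integral_congr fun τ _ => ?_
          rw [opCos_congr G (show h - τ = (((k+1:ℕ):ℝ)-((k:ℕ):ℝ))*h - τ by push_cast; ring)]

  refine ⟨hC1, hC2, ?_⟩
  intro k hk2 hkK
  obtain ⟨i, rfl⟩ : ∃ i, k = i + 2 := ⟨k - 2, by omega⟩
  have e21 : i + 2 - 1 = i + 1 := rfl
  have e22 : i + 2 - 2 = i := rfl
  have e11 : i + 1 - 1 = i := rfl
  obtain ⟨s2ψ, s2φ⟩ := sumE (i+2) (by omega) hkK
  obtain ⟨s1ψ, s1φ⟩ := sumE (i+1) (by omega) (by omega)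
  have cθ2 : ∀ l : ℕ, Continuous fun τ : ℝ => (((i+2:ℕ):ℝ)-(l:ℝ))*h - τ :=
    fun l => continuous_const.sub continuous_id
  have cθ1 : ∀ l : ℕ, Continuous fun τ : ℝ => (((i+1:ℕ):ℝ)-(l:ℝ))*h - τ :=
    fun l => continuous_const.sub continuous_id
  have cθA : ∀ l : ℕ, Continuous fun τ : ℝ => (((i+2:ℕ):ℝ)-(l:ℝ))*h - h/2 - τ :=
    fun l => continuous_const.sub continuous_id
  have hins : Finset.range (i+1) = insert 0 (Finset.Icc 1 i) := by
    ext x; simp only [Finset.mem_range, Finset.mem_insert, Finset.mem_Icc]; omega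
  have hnotmem : (0:ℕ) ∉ Finset.Icc 1 i := by simp
  have hP0 : ∀ τ:ℝ, P 0 τ = 0 := fun τ => by simp [hP, hε0, hε'0]
  constructor
  · -- ε recursion
    have keyψ : ∀ l ∈ Finset.range (i+1),
        (∫ τ in (0:ℝ)..h, Ginv (opSin ((((i+2:ℕ):ℝ)-(l:ℝ))*h - τ) G
            (m (t₀+l*h+τ) (V l τ)))) -
        (∫ τ in (0:ℝ)..h, Ginv (opSin ((((i+1:ℕ):ℝ)-(l:ℝ))*h - τ) G
            (m (t₀+l*h+τ) (V l τ)))) =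
        (2:ℝ) • Ginv (opSin (h/2) G (∫ τ in (0:ℝ)..h,
            opCos ((((i+2:ℕ):ℝ)-(l:ℝ))*h - h/2 - τ) G (m (t₀+l*h+τ) (V l τ)))) := by
      intro l _
      rw [← intervalIntegral.integral_sub (intGS _ (cθ2 l) _ _ (contV l))
        (intGS _ (cθ1 l) _ _ (contV l))]
      have step1 : (∫ τ in (0:ℝ)..h,
          (Ginv (opSin ((((i+2:ℕ):ℝ)-(l:ℝ))*h - τ) G (m (t₀+l*h+τ) (V l τ))) -
           Ginv (opSin ((((i+1:ℕ):ℝ)-(l:ℝ))*h - τ) G (m (t₀+l*h+τ) (V l τ))))) =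
          ∫ τ in (0:ℝ)..h, (2:ℝ) • Ginv (opSin (h/2) G
            (opCos ((((i+2:ℕ):ℝ)-(l:ℝ))*h - h/2 - τ) G (m (t₀+l*h+τ) (V l τ)))) := by
        refine intervalIntegral.integral_congr fun τ _ => ?_
        rw [← map_sub Ginv,
          opSin_congr G (show (((i+2:ℕ):ℝ)-(l:ℝ))*h - τ =
            ((((i+2:ℕ):ℝ)-(l:ℝ))*h - h/2 - τ) + h/2 by push_cast; ring),
          opSin_congr G (show (((i+1:ℕ):ℝ)-(l:ℝ))*h - τ =
            ((((i+2:ℕ):ℝ)-(l:ℝ))*h - h/2 - τ) - h/2 by push_cast; ring),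
          telS, hGsmul]
      rw [step1, intervalIntegral.integral_smul,
        ContinuousLinearMap.intervalIntegral_comp_comm Ginv
          ((continuous_const.clm_apply (contC _ (cθA l) _ _ (contV l))).intervalIntegrable 0 h),
        ContinuousLinearMap.intervalIntegral_comp_comm (opSin (h/2) G)
          (intC _ (cθA l) _ _ (contV l))]
    have hΔ : (∑ l ∈ Finset.range (i+1), ∫ τ in (0:ℝ)..h,
          Ginv (opSin ((((i+2:ℕ):ℝ)-(l:ℝ))*h - τ) G (m (t₀+l*h+τ) (V l τ)))) -
        (∑ l ∈ Finset.range (i+1), ∫ τ in (0:ℝ)..h,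
          Ginv (opSin ((((i+1:ℕ):ℝ)-(l:ℝ))*h - τ) G (m (t₀+l*h+τ) (V l τ)))) =
        (2:ℝ) • Ginv (opSin (h/2) G (∑ l ∈ Finset.range (i+1), ∫ τ in (0:ℝ)..h,
          opCos ((((i+2:ℕ):ℝ)-(l:ℝ))*h - h/2 - τ) G (m (t₀+l*h+τ) (V l τ)))) := by
      rw [← Finset.sum_sub_distrib, Finset.sum_congr rfl keyψ, ← Finset.smul_sum,
        ← map_sum Ginv, ← map_sum (opSin (h/2) G)]
    have hεeq : ε (i+2) = ε (i+1) +
        (2:ℝ) • Ginv (opSin (h/2) G (∑ l ∈ Finset.range (i+1), ∫ τ in (0:ℝ)..h,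
          opCos ((((i+2:ℕ):ℝ)-(l:ℝ))*h - h/2 - τ) G (m (t₀+l*h+τ) (V l τ)))) +
        ∫ τ in (0:ℝ)..h, Ginv (opSin (h - τ) G
          (m (t₀+((i+1:ℕ):ℝ)*h+τ) (V (i+1) τ))) := by
      rw [s2ψ, Finset.sum_range_succ]
      have h2 := hΔ
      rw [← s1ψ, sub_eq_iff_eq_add] at h2
      rw [h2]
      have hlast : (∫ τ in (0:ℝ)..h, Ginv (opSin ((((i+2:ℕ):ℝ)-((i+1:ℕ):ℝ))*h - τ) G
          (m (t₀+((i+1:ℕ):ℝ)*h+τ) (V (i+1) τ)))) =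
          ∫ τ in (0:ℝ)..h, Ginv (opSin (h - τ) G
            (m (t₀+((i+1:ℕ):ℝ)*h+τ) (V (i+1) τ))) :=
        intervalIntegral.integral_congr fun τ _ => by
          rw [opSin_congr G (show (((i+2:ℕ):ℝ)-((i+1:ℕ):ℝ))*h - τ = h - τ by push_cast; ring)]
      rw [hlast]
      abel
    have hsplitFc : ∀ l ∈ Finset.range (i+1),
        (∫ τ in (0:ℝ)..h, opCos ((((i+2:ℕ):ℝ)-(l:ℝ))*h - h/2 - τ) G
            (m (t₀+l*h+τ) (V l τ))) =
        (∫ τ in (0:ℝ)..h, opCos ((((i+2:ℕ):ℝ)-(l:ℝ))*h - h/2 - τ) G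
            (m (t₀+l*h+τ) (P l τ))) +
        (∫ τ in (0:ℝ)..h, opCos ((((i+2:ℕ):ℝ)-(l:ℝ))*h - h/2 - τ) G
            (m (t₀+l*h+τ) (D l τ))) := by
      intro l _
      simp only [hV, map_add]
      exact intervalIntegral.integral_add (intC _ (cθA l) _ _ (contP l))
        (intC _ (cθA l) _ _ (contD l))
    have hsumsplit : (∑ l ∈ Finset.range (i+1), ∫ τ in (0:ℝ)..h,
          opCos ((((i+2:ℕ):ℝ)-(l:ℝ))*h - h/2 - τ) G (m (t₀+l*h+τ) (V l τ))) =
        (∑ l ∈ Finset.Icc 1 i, ∫ τ in (0:ℝ)..h,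
          opCos ((((i+2:ℕ):ℝ)-(l:ℝ))*h - h/2 - τ) G (m (t₀+l*h+τ) (P l τ))) +
        (∑ l ∈ Finset.range (i+1), ∫ τ in (0:ℝ)..h,
          opCos ((((i+2:ℕ):ℝ)-(l:ℝ))*h - h/2 - τ) G (m (t₀+l*h+τ) (D l τ))) := by
      rw [Finset.sum_congr rfl hsplitFc, Finset.sum_add_distrib]
      congr 1
      rw [hins, Finset.sum_insert hnotmem]
      have hz : (∫ τ in (0:ℝ)..h, opCos ((((i+2:ℕ):ℝ)-((0:ℕ):ℝ))*h - h/2 - τ) G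
          (m (t₀+((0:ℕ):ℝ)*h+τ) (P 0 τ))) = 0 := by
        rw [show (∫ τ in (0:ℝ)..h, opCos ((((i+2:ℕ):ℝ)-((0:ℕ):ℝ))*h - h/2 - τ) G
            (m (t₀+((0:ℕ):ℝ)*h+τ) (P 0 τ))) = ∫ τ in (0:ℝ)..h, (0:E) from
          intervalIntegral.integral_congr fun τ _ => by rw [hP0 τ, map_zero, map_zero],
          intervalIntegral.integral_zero]
      rw [hz, zero_add]
    have hlastsplit : (∫ τ in (0:ℝ)..h, Ginv (opSin (h - τ) G
          (m (t₀+((i+1:ℕ):ℝ)*h+τ) (V (i+1) τ)))) =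
        (∫ τ in (0:ℝ)..h, Ginv (opSin (h - τ) G
          (m (t₀+((i+1:ℕ):ℝ)*h+τ) (P (i+1) τ)))) +
        (∫ τ in (0:ℝ)..h, Ginv (opSin (h - τ) G
          (m (t₀+((i+1:ℕ):ℝ)*h+τ) (D (i+1) τ)))) := by
      simp only [hV, map_add]
      exact intervalIntegral.integral_add (intGS _ contθ _ _ (contP (i+1)))
        (intGS _ contθ _ _ (contD (i+1)))
    rw [hεeq, hsumsplit, hlastsplit, map_add (opSin (h/2) G), map_add Ginv, smul_add,
      e21, e22]
    simp only [hP, hD, e11]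
    abel
  · -- ε' recursion
    have keyφ : ∀ l ∈ Finset.range (i+1),
        (∫ τ in (0:ℝ)..h, opCos ((((i+2:ℕ):ℝ)-(l:ℝ))*h - τ) G
            (m (t₀+l*h+τ) (V l τ))) -
        (∫ τ in (0:ℝ)..h, opCos ((((i+1:ℕ):ℝ)-(l:ℝ))*h - τ) G
            (m (t₀+l*h+τ) (V l τ))) =
        -((2:ℝ) • opSin (h/2) G (∫ τ in (0:ℝ)..h,
            opSin ((((i+2:ℕ):ℝ)-(l:ℝ))*h - h/2 - τ) G (m (t₀+l*h+τ) (V l τ)))) := by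
      intro l _
      rw [← intervalIntegral.integral_sub (intC _ (cθ2 l) _ _ (contV l))
        (intC _ (cθ1 l) _ _ (contV l))]
      have step1 : (∫ τ in (0:ℝ)..h,
          (opCos ((((i+2:ℕ):ℝ)-(l:ℝ))*h - τ) G (m (t₀+l*h+τ) (V l τ)) -
           opCos ((((i+1:ℕ):ℝ)-(l:ℝ))*h - τ) G (m (t₀+l*h+τ) (V l τ)))) =
          ∫ τ in (0:ℝ)..h, -((2:ℝ) • opSin (h/2) G
            (opSin ((((i+2:ℕ):ℝ)-(l:ℝ))*h - h/2 - τ) G (m (t₀+l*h+τ) (V l τ)))) := by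
        refine intervalIntegral.integral_congr fun τ _ => ?_
        rw [opCos_congr G (show (((i+2:ℕ):ℝ)-(l:ℝ))*h - τ =
            ((((i+2:ℕ):ℝ)-(l:ℝ))*h - h/2 - τ) + h/2 by push_cast; ring),
          opCos_congr G (show (((i+1:ℕ):ℝ)-(l:ℝ))*h - τ =
            ((((i+2:ℕ):ℝ)-(l:ℝ))*h - h/2 - τ) - h/2 by push_cast; ring),
          telC]
      rw [step1, intervalIntegral.integral_neg, intervalIntegral.integral_smul,
        ContinuousLinearMap.intervalIntegral_comp_comm (opSin (h/2) G)
          (intS _ (cθA l) _ _ (contV l))]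
    have hΔ : (∑ l ∈ Finset.range (i+1), ∫ τ in (0:ℝ)..h,
          opCos ((((i+2:ℕ):ℝ)-(l:ℝ))*h - τ) G (m (t₀+l*h+τ) (V l τ))) -
        (∑ l ∈ Finset.range (i+1), ∫ τ in (0:ℝ)..h,
          opCos ((((i+1:ℕ):ℝ)-(l:ℝ))*h - τ) G (m (t₀+l*h+τ) (V l τ))) =
        -((2:ℝ) • opSin (h/2) G (∑ l ∈ Finset.range (i+1), ∫ τ in (0:ℝ)..h,
          opSin ((((i+2:ℕ):ℝ)-(l:ℝ))*h - h/2 - τ) G (m (t₀+l*h+τ) (V l τ)))) := by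
      rw [← Finset.sum_sub_distrib, Finset.sum_congr rfl keyφ, Finset.sum_neg_distrib,
        ← Finset.smul_sum, ← map_sum (opSin (h/2) G)]
    have hεeq : ε' (i+2) = ε' (i+1) +
        -((2:ℝ) • opSin (h/2) G (∑ l ∈ Finset.range (i+1), ∫ τ in (0:ℝ)..h,
          opSin ((((i+2:ℕ):ℝ)-(l:ℝ))*h - h/2 - τ) G (m (t₀+l*h+τ) (V l τ)))) +
        ∫ τ in (0:ℝ)..h, opCos (h - τ) G
          (m (t₀+((i+1:ℕ):ℝ)*h+τ) (V (i+1) τ)) := by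
      rw [s2φ, Finset.sum_range_succ]
      have h2 := hΔ
      rw [← s1φ, sub_eq_iff_eq_add] at h2
      rw [h2]
      have hlast : (∫ τ in (0:ℝ)..h, opCos ((((i+2:ℕ):ℝ)-((i+1:ℕ):ℝ))*h - τ) G
          (m (t₀+((i+1:ℕ):ℝ)*h+τ) (V (i+1) τ))) =
          ∫ τ in (0:ℝ)..h, opCos (h - τ) G
            (m (t₀+((i+1:ℕ):ℝ)*h+τ) (V (i+1) τ)) :=
        intervalIntegral.integral_congr fun τ _ => by
          rw [opCos_congr G (show (((i+2:ℕ):ℝ)-((i+1:ℕ):ℝ))*h - τ = h - τ by push_cast; ring)]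
      rw [hlast]
      abel
    have hsplitFc : ∀ l ∈ Finset.range (i+1),
        (∫ τ in (0:ℝ)..h, opSin ((((i+2:ℕ):ℝ)-(l:ℝ))*h - h/2 - τ) G
            (m (t₀+l*h+τ) (V l τ))) =
        (∫ τ in (0:ℝ)..h, opSin ((((i+2:ℕ):ℝ)-(l:ℝ))*h - h/2 - τ) G
            (m (t₀+l*h+τ) (P l τ))) +
        (∫ τ in (0:ℝ)..h, opSin ((((i+2:ℕ):ℝ)-(l:ℝ))*h - h/2 - τ) G
            (m (t₀+l*h+τ) (D l τ))) := by
      intro l _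
      simp only [hV, map_add]
      exact intervalIntegral.integral_add (intS _ (cθA l) _ _ (contP l))
        (intS _ (cθA l) _ _ (contD l))
    have hsumsplit : (∑ l ∈ Finset.range (i+1), ∫ τ in (0:ℝ)..h,
          opSin ((((i+2:ℕ):ℝ)-(l:ℝ))*h - h/2 - τ) G (m (t₀+l*h+τ) (V l τ))) =
        (∑ l ∈ Finset.Icc 1 i, ∫ τ in (0:ℝ)..h,
          opSin ((((i+2:ℕ):ℝ)-(l:ℝ))*h - h/2 - τ) G (m (t₀+l*h+τ) (P l τ))) +
        (∑ l ∈ Finset.range (i+1), ∫ τ in (0:ℝ)..h,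
          opSin ((((i+2:ℕ):ℝ)-(l:ℝ))*h - h/2 - τ) G (m (t₀+l*h+τ) (D l τ))) := by
      rw [Finset.sum_congr rfl hsplitFc, Finset.sum_add_distrib]
      congr 1
      rw [hins, Finset.sum_insert hnotmem]
      have hz : (∫ τ in (0:ℝ)..h, opSin ((((i+2:ℕ):ℝ)-((0:ℕ):ℝ))*h - h/2 - τ) G
          (m (t₀+((0:ℕ):ℝ)*h+τ) (P 0 τ))) = 0 := by
        rw [show (∫ τ in (0:ℝ)..h, opSin ((((i+2:ℕ):ℝ)-((0:ℕ):ℝ))*h - h/2 - τ) G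
            (m (t₀+((0:ℕ):ℝ)*h+τ) (P 0 τ))) = ∫ τ in (0:ℝ)..h, (0:E) from
          intervalIntegral.integral_congr fun τ _ => by rw [hP0 τ, map_zero, map_zero],
          intervalIntegral.integral_zero]
      rw [hz, zero_add]
    have hlastsplit : (∫ τ in (0:ℝ)..h, opCos (h - τ) G
          (m (t₀+((i+1:ℕ):ℝ)*h+τ) (V (i+1) τ))) =
        (∫ τ in (0:ℝ)..h, opCos (h - τ) G
          (m (t₀+((i+1:ℕ):ℝ)*h+τ) (P (i+1) τ))) +
        (∫ τ in (0:ℝ)..h, opCos (h - τ) G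
          (m (t₀+((i+1:ℕ):ℝ)*h+τ) (D (i+1) τ))) := by
      simp only [hV, map_add]
      exact intervalIntegral.integral_add (intC _ contθ _ _ (contP (i+1)))
        (intC _ contθ _ _ (contD (i+1)))
    rw [hεeq, hsumsplit, hlastsplit, map_add (opSin (h/2) G), smul_add, neg_add,
      e21, e22]
    simp only [hP, hD, e11]
    abel

end main

/-- **Theorem 3.2, telescoped global error recursion.**
With the errors `ε, ε'`, Taylor defects `Etay, Ebar` and the remainders `R, R'` as in the
paper (the general formula for `R k`, `R' k` specializes at `k = 1` to `ℛ₁`, `ℛ'₁` since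
`Ē₀ = 0` and the sum over `l ≤ k−2` is then empty), one has `ε₁ = ℛ₁`, `ε'₁ = ℛ'₁` and the
telescoped recursions for all `2 ≤ k ≤ K`. -/
theorem telescoped_global_error_recursion
    {E : Type*} [NormedAddCommGroup E] [NormedSpace ℂ E] [CompleteSpace E]
    (G Ginv : E →L[ℂ] E) (hGr : G * Ginv = 1) (hGl : Ginv * G = 1)
    (t₀ h : ℝ) (hh : 0 < h) (K : ℕ) (hK : 2 ≤ K)
    (m : ℝ → (E →L[ℂ] E)) (hm : Continuous m)
    (ψ φ σ : ℝ → E)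
    (hdψ : ∀ t : ℝ, HasDerivAt ψ (φ t) t) (hdφ : ∀ t : ℝ, HasDerivAt φ (σ t) t)
    -- one-step Duhamel relations for the exact solution
    (hstepψ : ∀ k : ℕ, k ≤ K - 1 →
      ψ (t₀ + ((k : ℝ) + 1) * h) =
        opCos h G (ψ (t₀ + k * h)) + Ginv (opSin h G (φ (t₀ + k * h))) +
          ∫ τ in (0:ℝ)..h,
            Ginv (opSin (h - τ) G (m (t₀ + k * h + τ) (ψ (t₀ + k * h + τ)))))
    (hstepφ : ∀ k : ℕ, k ≤ K - 1 →
      φ (t₀ + ((k : ℝ) + 1) * h) =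
        -(G (opSin h G (ψ (t₀ + k * h)))) + opCos h G (φ (t₀ + k * h)) +
          ∫ τ in (0:ℝ)..h,
            opCos (h - τ) G (m (t₀ + k * h + τ) (ψ (t₀ + k * h + τ))))
    -- the numerical scheme Ξ³ started from the exact data
    (Ψ Ψ' : ℕ → E) (hΨ0 : Ψ 0 = ψ t₀) (hΨ'0 : Ψ' 0 = φ t₀)
    (hΨ1 : Ψ 1 = opCos h G (ψ t₀) + Ginv (opSin h G (φ t₀)) +
      ∫ τ in (0:ℝ)..h,
        Ginv (opSin (h - τ) G (m (t₀ + τ)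
          (ψ t₀ + τ • φ t₀ + (τ ^ 2 / 2) • σ t₀))))
    (hΨ'1 : Ψ' 1 = -(G (opSin h G (ψ t₀))) + opCos h G (φ t₀) +
      ∫ τ in (0:ℝ)..h,
        opCos (h - τ) G (m (t₀ + τ)
          (ψ t₀ + τ • φ t₀ + (τ ^ 2 / 2) • σ t₀)))
    (hΨstep : ∀ k : ℕ, 1 ≤ k → k ≤ K - 1 →
      Ψ (k + 1) = opCos h G (Ψ k) + Ginv (opSin h G (Ψ' k)) +
        ∫ τ in (0:ℝ)..h,
          Ginv (opSin (h - τ) G (m (t₀ + k * h + τ)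
            (Ψ k + τ • Ψ' k + (τ ^ 2 / (2 * h)) • (Ψ' k - Ψ' (k - 1))))))
    (hΨ'step : ∀ k : ℕ, 1 ≤ k → k ≤ K - 1 →
      Ψ' (k + 1) = -(G (opSin h G (Ψ k))) + opCos h G (Ψ' k) +
        ∫ τ in (0:ℝ)..h,
          opCos (h - τ) G (m (t₀ + k * h + τ)
            (Ψ k + τ • Ψ' k + (τ ^ 2 / (2 * h)) • (Ψ' k - Ψ' (k - 1))))) :
    -- conclusion
    (let ε : ℕ → E := fun k => ψ (t₀ + k * h) - Ψ k
     let ε' : ℕ → E := fun k => φ (t₀ + k * h) - Ψ' k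
     let Etay : ℕ → ℝ → E := fun l τ =>
       ψ (t₀ + l * h + τ) - ψ (t₀ + l * h) - τ • φ (t₀ + l * h) -
         (τ ^ 2 / 2) • σ (t₀ + l * h)
     let Ebar : ℕ → E := fun l =>
       if l = 0 then 0 else
         σ (t₀ + l * h) - h⁻¹ • (φ (t₀ + l * h) - φ (t₀ + ((l : ℝ) - 1) * h))
     let R : ℕ → E := fun k =>
       (2 : ℝ) • Ginv (opSin (h / 2) G
         (∑ l ∈ Finset.range (k - 1),
           ∫ τ in (0:ℝ)..h,
             opCos (((k : ℝ) - l) * h - h / 2 - τ) G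
               (m (t₀ + l * h + τ) ((τ ^ 2 / 2) • Ebar l + Etay l τ)))) +
       ∫ τ in (0:ℝ)..h,
         Ginv (opSin (h - τ) G
           (m (t₀ + (k - 1 : ℕ) * h + τ)
             ((τ ^ 2 / 2) • Ebar (k - 1) + Etay (k - 1) τ)))
     let R' : ℕ → E := fun k =>
       -((2 : ℝ) • opSin (h / 2) G
         (∑ l ∈ Finset.range (k - 1),
           ∫ τ in (0:ℝ)..h,
             opSin (((k : ℝ) - l) * h - h / 2 - τ) G
               (m (t₀ + l * h + τ) ((τ ^ 2 / 2) • Ebar l + Etay l τ)))) +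
       ∫ τ in (0:ℝ)..h,
         opCos (h - τ) G
           (m (t₀ + (k - 1 : ℕ) * h + τ)
             ((τ ^ 2 / 2) • Ebar (k - 1) + Etay (k - 1) τ))
     (ε 1 = ∫ τ in (0:ℝ)..h, Ginv (opSin (h - τ) G (m (t₀ + τ) (Etay 0 τ)))) ∧
     (ε' 1 = ∫ τ in (0:ℝ)..h, opCos (h - τ) G (m (t₀ + τ) (Etay 0 τ))) ∧
       ∀ k : ℕ, 2 ≤ k → k ≤ K →
         (ε k = ε (k - 1) +
           (2 : ℝ) • Ginv (opSin (h / 2) G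
             (∑ l ∈ Finset.Icc 1 (k - 2),
               ∫ τ in (0:ℝ)..h,
                 opCos (((k : ℝ) - l) * h - h / 2 - τ) G
                   (m (t₀ + l * h + τ)
                     (ε l + (τ * (1 + τ / (2 * h))) • ε' l -
                       (τ ^ 2 / (2 * h)) • ε' (l - 1))))) +
           (∫ τ in (0:ℝ)..h,
             Ginv (opSin (h - τ) G
               (m (t₀ + (k - 1 : ℕ) * h + τ)
                 (ε (k - 1) + (τ * (1 + τ / (2 * h))) • ε' (k - 1) -
                   (τ ^ 2 / (2 * h)) • ε' (k - 2))))) + R k) ∧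
         (ε' k = ε' (k - 1) -
           (2 : ℝ) • opSin (h / 2) G
             (∑ l ∈ Finset.Icc 1 (k - 2),
               ∫ τ in (0:ℝ)..h,
                 opSin (((k : ℝ) - l) * h - h / 2 - τ) G
                   (m (t₀ + l * h + τ)
                     (ε l + (τ * (1 + τ / (2 * h))) • ε' l -
                       (τ ^ 2 / (2 * h)) • ε' (l - 1)))) +
           (∫ τ in (0:ℝ)..h,
             opCos (h - τ) G
               (m (t₀ + (k - 1 : ℕ) * h + τ)
                 (ε (k - 1) + (τ * (1 + τ / (2 * h))) • ε' (k - 1) -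
                   (τ ^ 2 / (2 * h)) • ε' (k - 2)))) + R' k)) := by
  intro ε ε' Etay Ebar R R'
  have H := auxMain G Ginv hGr hGl t₀ h hh K hK m hm ψ φ σ hdψ hdφ hstepψ hstepφ
    Ψ Ψ' hΨ0 hΨ'0 hΨ1 hΨ'1 hΨstep hΨ'step ε ε' Etay Ebar
    (fun _ => rfl) (fun _ => rfl) (fun _ _ => rfl) rfl (fun l hl => by
      simp only [Ebar, if_neg hl])
  refine ⟨H.1, H.2.1, fun k hk2 hkK => ?_⟩
  exact H.2.2 k hk2 hkK
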